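/- Assume N ≥ 2. Let p ≥ 0 be an integer and let λ be a weight with (λ, η) = 1 - N and (λ, α_N) = -p - 1, and let μ be the weight determined by (μ, α_j) = (λ, α_j) + p·a_{Nj} for all j (i.e. μ = λ + p α_N). Then, with F = f_N: F^{p+1} · det→(D^{N}(μ)) = v^{p+1} · det→(D^{N+1}(λ)) · F^{p} in U. -/

import Mathlib

noncomputable section

open FreeAlgebra

/-- `𝕜 = F(q)`, the field of rational functions over `F`. -/
abbrev kk (F : Type) [Field F] : Type := RatFunc F

/-- The variable `q`. -/
def qq (F : Type) [Field F] : kk F := RatFunc.X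

/-- `v = q²`. -/
def vv (F : Type) [Field F] : kk F := qq F ^ 2

/-- The balanced quantum integer `[n]_v`. -/
def qint (F : Type) [Field F] (n : ℤ) : kk F :=
  (vv F ^ n - vv F ^ (-n)) / (vv F - (vv F)⁻¹)

/-- The quantum factorial `[m]_v!`. -/
def qfact (F : Type) [Field F] (m : ℕ) : kk F :=
  ∏ j ∈ Finset.Icc 1 m, qint F j

/-- The balanced Gaussian binomial coefficient `C(n,i)_v`. -/
def qbinom (F : Type) [Field F] (n i : ℕ) : kk F :=
  qfact F n / (qfact F i * qfact F (n - i))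

/-- The Cartan matrix of `sl(N+1)`, with 1-based indices. -/
def cartan (i j : ℕ) : ℤ :=
  if i = j then 2 else if i + 1 = j ∨ j + 1 = i then -1 else 0

/-- Generators of `U_q(sl(N+1))`: `e i`, `f i`, `k i`, `kinv i` (0-based `i : Fin N`,
corresponding to the 1-based index `i+1`). -/
inductive Gen (N : ℕ) : Type
  | e : Fin N → Gen N
  | f : Fin N → Gen N
  | k : Fin N → Gen N
  | kinv : Fin N → Gen N

/-- The defining relations of `U_q(sl(N+1))`. -/
inductive UqRel (F : Type) [Field F] (N : ℕ) :
    FreeAlgebra (kk F) (Gen N) → FreeAlgebra (kk F) (Gen N) → Prop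
  | kkinv (i : Fin N) : UqRel F N (ι (kk F) (Gen.k i) * ι (kk F) (Gen.kinv i)) 1
  | kinvk (i : Fin N) : UqRel F N (ι (kk F) (Gen.kinv i) * ι (kk F) (Gen.k i)) 1
  | kcomm (i j : Fin N) :
      UqRel F N (ι (kk F) (Gen.k i) * ι (kk F) (Gen.k j))
        (ι (kk F) (Gen.k j) * ι (kk F) (Gen.k i))
  | ke (i j : Fin N) :
      UqRel F N (ι (kk F) (Gen.k i) * ι (kk F) (Gen.e j) * ι (kk F) (Gen.kinv i))
        ((qq F ^ cartan ((i : ℕ) + 1) ((j : ℕ) + 1)) • ι (kk F) (Gen.e j))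
  | kf (i j : Fin N) :
      UqRel F N (ι (kk F) (Gen.k i) * ι (kk F) (Gen.f j) * ι (kk F) (Gen.kinv i))
        ((qq F ^ (-cartan ((i : ℕ) + 1) ((j : ℕ) + 1))) • ι (kk F) (Gen.f j))
  | ef (i j : Fin N) :
      UqRel F N (ι (kk F) (Gen.e i) * ι (kk F) (Gen.f j) - ι (kk F) (Gen.f j) * ι (kk F) (Gen.e i))
        (if i = j then
          ((qq F ^ 2 - qq F ^ (-2 : ℤ))⁻¹) •
            ((ι (kk F) (Gen.k i)) ^ 2 - (ι (kk F) (Gen.kinv i)) ^ 2)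
        else 0)
  | serre_e_near (i j : Fin N) (h : (i : ℕ) + 1 = j ∨ (j : ℕ) + 1 = i) :
      UqRel F N
        ((ι (kk F) (Gen.e i)) ^ 2 * ι (kk F) (Gen.e j)
          - (qq F ^ 2 + qq F ^ (-2 : ℤ)) •
              (ι (kk F) (Gen.e i) * ι (kk F) (Gen.e j) * ι (kk F) (Gen.e i))
          + ι (kk F) (Gen.e j) * (ι (kk F) (Gen.e i)) ^ 2) 0
  | serre_f_near (i j : Fin N) (h : (i : ℕ) + 1 = j ∨ (j : ℕ) + 1 = i) :
      UqRel F N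
        ((ι (kk F) (Gen.f i)) ^ 2 * ι (kk F) (Gen.f j)
          - (qq F ^ 2 + qq F ^ (-2 : ℤ)) •
              (ι (kk F) (Gen.f i) * ι (kk F) (Gen.f j) * ι (kk F) (Gen.f i))
          + ι (kk F) (Gen.f j) * (ι (kk F) (Gen.f i)) ^ 2) 0
  | serre_e_far (i j : Fin N) (h : (i : ℕ) + 1 < j ∨ (j : ℕ) + 1 < i) :
      UqRel F N (ι (kk F) (Gen.e i) * ι (kk F) (Gen.e j))
        (ι (kk F) (Gen.e j) * ι (kk F) (Gen.e i))
  | serre_f_far (i j : Fin N) (h : (i : ℕ) + 1 < j ∨ (j : ℕ) + 1 < i) :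
      UqRel F N (ι (kk F) (Gen.f i) * ι (kk F) (Gen.f j))
        (ι (kk F) (Gen.f j) * ι (kk F) (Gen.f i))

/-- The quantized enveloping algebra `U = U_q(sl(N+1))`. -/
abbrev Uq (F : Type) [Field F] (N : ℕ) : Type := RingQuot (UqRel F N)

variable (F : Type) [Field F] (N : ℕ)

/-- The image of a generator in `U`. -/
def gen (g : Gen N) : Uq F N := RingQuot.mkAlgHom (kk F) (UqRel F N) (ι (kk F) g)

/-- `e_i` (1-based index `1 ≤ i ≤ N`; junk value `0` outside this range). -/
def egen (i : ℕ) : Uq F N :=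
  if h : 1 ≤ i ∧ i ≤ N then gen F N (Gen.e ⟨i - 1, by omega⟩) else 0

/-- `f_i` (1-based index). -/
def fgen (i : ℕ) : Uq F N :=
  if h : 1 ≤ i ∧ i ≤ N then gen F N (Gen.f ⟨i - 1, by omega⟩) else 0

/-- `k_i` (1-based index). -/
def kgen (i : ℕ) : Uq F N :=
  if h : 1 ≤ i ∧ i ≤ N then gen F N (Gen.k ⟨i - 1, by omega⟩) else 0

/-- `k_i⁻¹` (1-based index). -/
def kinvgen (i : ℕ) : Uq F N :=
  if h : 1 ≤ i ∧ i ≤ N then gen F N (Gen.kinv ⟨i - 1, by omega⟩) else 0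

/-- Auxiliary recursion: `fword i d = f_{i, i+1+d}`. -/
def fword (i : ℕ) : ℕ → Uq F N
  | 0 => fgen F N i
  | d + 1 =>
      qq F • (fword i d * fgen F N (i + 1 + d)) -
        (qq F)⁻¹ • (fgen F N (i + 1 + d) * fword i d)

/-- The quantum root vector `f_{i,j}` (for `1 ≤ i < j ≤ N+1`). -/
def fij (i j : ℕ) : Uq F N := fword F N i (j - i - 1)

/-- Product of `f_{a,b}` over successive entries of a list. -/
def fList : List ℕ → Uq F N
  | a :: b :: rest => fij F N a b * fList (b :: rest)
  | _ => 1

/-- `f_S` for a finite set `S` of indices. -/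
def fSet (S : Finset ℕ) : Uq F N := fList F N (S.sort (· ≤ ·))

/-- The index set `𝕀` of subsets of `{1,…,N+1}` containing `1` and `N+1`. -/
def II : Finset (Finset ℕ) :=
  (Finset.Icc 1 (N + 1)).powerset.filter fun I => 1 ∈ I ∧ N + 1 ∈ I

/-- `r(I) = {s - 1 : s ∈ {1,…,N+1} \ I}`. -/
def rSet (I : Finset ℕ) : Finset ℕ := (Finset.Icc 1 (N + 1) \ I).image (· - 1)

/-- `k_{σ_i} = k_1 ⋯ k_i`. -/
def kσ (i : ℕ) : Uq F N := ((List.range i).map fun j => kgen F N (j + 1)).prod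

/-- `K_{σ_i} = k_{σ_i}²`. -/
def Kσ (i : ℕ) : Uq F N := kσ F N i ^ 2

/-- `k_{σ_i}⁻¹ = k_1⁻¹ ⋯ k_i⁻¹`. -/
def kσinv (i : ℕ) : Uq F N := ((List.range i).map fun j => kinvgen F N (j + 1)).prod

/-- `K_{σ_i}⁻¹`. -/
def KσInv (i : ℕ) : Uq F N := kσinv F N i ^ 2

/-- The element `h_i = -q⁻¹ v^{-(i-1)} K_{σ_i}⁻¹ (K_{σ_i} v^i - K_{σ_i}⁻¹ v^{-i})/(v - v⁻¹) ∈ U`. -/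
def hElt (i : ℕ) : Uq F N :=
  (-(qq F)⁻¹ * vv F ^ (1 - (i : ℤ)) * (vv F - (vv F)⁻¹)⁻¹) •
    (KσInv F N i * (vv F ^ (i : ℤ) • Kσ F N i - vv F ^ (-(i : ℤ)) • KσInv F N i))

/-- `H_I = ∏_{i ∈ r(I)} h_i` (product taken in increasing order of indices). -/
def HI (I : Finset ℕ) : Uq F N := (((rSet N I).sort (· ≤ ·)).map (hElt F N)).prod

/-- A weight `λ` is recorded by its values `(λ, α_j)` for `1 ≤ j ≤ N`;
`pairσ lam i = (λ, σ_i) = (λ, α_1 + ⋯ + α_i)`. -/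
def pairσ (lam : ℕ → ℤ) (i : ℕ) : ℤ := ∑ j ∈ Finset.Icc 1 i, lam j

/-- The scalar `h_i(λ) = -q⁻¹ v^{-((λ,σ_i)+i-1)} [(λ,σ_i)+i]_v`. -/
def hval (lam : ℕ → ℤ) (i : ℕ) : kk F :=
  -(qq F)⁻¹ * vv F ^ (-(pairσ lam i + (i : ℤ) - 1)) * qint F (pairσ lam i + (i : ℤ))

/-- The scalar `H_I(λ) = ∏_{i ∈ r(I)} h_i(λ)`. -/
def HIval (lam : ℕ → ℤ) (I : Finset ℕ) : kk F := ∏ i ∈ rSet N I, hval F lam i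

/-- The left ideal `J_λ` of `U` generated by `e_1, …, e_N` and the `k_j - q^{(λ,α_j)}`. -/
def vermaIdeal (lam : ℕ → ℤ) : Submodule (Uq F N) (Uq F N) :=
  Submodule.span (Uq F N)
    ({x | ∃ j, 1 ≤ j ∧ j ≤ N ∧ x = egen F N j} ∪
      {x | ∃ j, 1 ≤ j ∧ j ≤ N ∧
        x = kgen F N j - algebraMap (kk F) (Uq F N) (qq F ^ lam j)})

/-- The Verma module `M(λ) = U/J_λ`. -/
abbrev Verma (lam : ℕ → ℤ) : Type := Uq F N ⧸ vermaIdeal F N lam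

/-- The highest weight vector `v_λ`, the image of `1` in `M(λ)`. -/
def hw (lam : ℕ → ℤ) : Verma F N lam := Submodule.Quotient.mk 1

/-- The candidate Shapovalov element `Θ_η = Σ_{I ∈ 𝕀} f_I H_I`. -/
def Theta : Uq F N := ∑ I ∈ II N, fSet F N I * HI F N I

/-- `D^n(λ)`: the `(n-1) × (n-1)` matrix over `U` with `(i,j)` entry (1-based)
`f_{i,j+1}` if `i ≤ j`, `-h_j(λ)·1` if `i = j+1`, and `0` otherwise. -/
def Dmat (lam : ℕ → ℤ) (n : ℕ) : Matrix (Fin (n - 1)) (Fin (n - 1)) (Uq F N) :=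
  Matrix.of fun i j =>
    if (i : ℕ) ≤ (j : ℕ) then fij F N ((i : ℕ) + 1) ((j : ℕ) + 2)
    else if (i : ℕ) = (j : ℕ) + 1 then
      -(algebraMap (kk F) (Uq F N) (hval F lam ((j : ℕ) + 1)))
    else 0

/-- The left-to-right determinant of a matrix with noncommutative entries. -/
def ldet {m : ℕ} (B : Matrix (Fin m) (Fin m) (Uq F N)) : Uq F N :=
  ∑ w : Equiv.Perm (Fin m),
    ((Equiv.Perm.sign w : ℤˣ) : ℤ) • ((List.finRange m).map fun j => B (w j) j).prod


section AbsAlg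
variable {K : Type} [Field K] {R : Type} [Ring R] [Algebra K R]

lemma qsh_serre_ext (q c : K) (B A' a' A : R) (hc : B * A' = A' * B)
    (hS : B*B*a' - c • (B*a'*B) + a'*(B*B) = 0)
    (hA : A = q • (A'*a') - q⁻¹ • (a'*A')) :
    B*B*A - c • (B*A*B) + A*(B*B) = 0 := by
  have hBB : B*B*A' = A'*(B*B) := by rw [mul_assoc, hc, ← mul_assoc, hc, mul_assoc]
  have h1 : B*B*(A'*a') = A'*(B*B*a') := by rw [← mul_assoc, hBB, mul_assoc]
  have h2 : B*(A'*a')*B = A'*(B*a'*B) := by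
    rw [← mul_assoc B A' a', hc, mul_assoc A' B a', mul_assoc]
  have h3 : (A'*a')*(B*B) = A'*(a'*(B*B)) := mul_assoc _ _ _
  have h4 : B*B*(a'*A') = (B*B*a')*A' := (mul_assoc (B*B) a' A').symm
  have h5 : B*(a'*A')*B = (B*a'*B)*A' := by
    rw [← mul_assoc B a' A', mul_assoc (B*a') A' B, ← hc, ← mul_assoc]
  have h6 : (a'*A')*(B*B) = (a'*(B*B))*A' := by
    rw [mul_assoc a' A' (B*B), ← hBB, ← mul_assoc a' (B*B) A']
  have h9 : a'*(B*B) = c • (B*a'*B) - B*B*a' := by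
    rw [← sub_eq_zero, ← hS]; abel
  subst hA
  simp only [mul_sub, sub_mul, mul_smul_comm, smul_mul_assoc]
  rw [h1, h2, h3, h4, h5, h6, h9]
  simp only [mul_sub, sub_mul, mul_smul_comm, smul_mul_assoc, smul_sub, smul_smul]
  module

lemma qsh_BC (q : K) (hq : q ≠ 0) (v : K) (hv : v = q ^ 2) (B A C : R)
    (hS : B*B*A - (v + v⁻¹) • (B*A*B) + A*(B*B) = 0)
    (hC : C = q • (A*B) - q⁻¹ • (B*A)) : B * C = v⁻¹ • (C * B) := by
  have h9 : B*B*A = (v+v⁻¹) • (B*A*B) - A*(B*B) := by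
    rw [← sub_eq_zero, ← hS]; abel
  subst hC
  rw [mul_sub, sub_mul]
  simp only [mul_smul_comm, smul_mul_assoc]
  rw [← mul_assoc B A B, ← mul_assoc B B A, h9, mul_assoc A B B]
  simp only [smul_sub, smul_smul]
  have hv0 : v ≠ 0 := by rw [hv]; exact pow_ne_zero _ hq
  match_scalars <;> (rw [hv]; field_simp; try ring)

lemma qsh_BA (q : K) (hq : q ≠ 0) (B A C : R)
    (hC : C = q • (A*B) - q⁻¹ • (B*A)) : B*A = (q^2) • (A*B) - q • C := by
  subst hC
  simp only [smul_sub, smul_smul]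
  match_scalars <;> (field_simp; try ring)

lemma qsh_pow (q v : K) (hq : q ≠ 0) (hv : v = q ^ 2) (B A C : R)
    (hBA : B*A = v • (A*B) - q • C) (hBC : B*C = v⁻¹ • (C*B)) (cf : ℕ → K)
    (hc1 : cf 1 = 1) (hcr : ∀ n : ℕ, cf (n+2) = v^(n+1) + v⁻¹ * cf (n+1)) :
    ∀ p : ℕ, B^(p+1) * A = v^(p+1) • (A * B^(p+1)) - (q * cf (p+1)) • (C * B^p) := by
  have hv0 : v ≠ 0 := by rw [hv]; exact pow_ne_zero _ hq
  intro p
  induction p with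
  | zero => simpa [hc1] using hBA
  | succ n ih =>
    have hBpow : B^(n+2) = B*B^(n+1) := by rw [pow_succ']
    rw [hBpow, mul_assoc, ih, mul_sub]
    simp only [mul_smul_comm]
    rw [← mul_assoc B A (B^(n+1)), hBA, ← mul_assoc B C (B^n), hBC]
    simp only [sub_mul, smul_mul_assoc, smul_sub, smul_smul]
    rw [mul_assoc A B (B^(n+1)), ← hBpow, mul_assoc C B (B^n), ← pow_succ' B n, hcr n]
    match_scalars <;> (field_simp; try ring)

end AbsAlg

namespace Aux

lemma umul_neg (x y : Uq F N) : x * -y = -(x * y) := mul_neg (α := Uq F N) x y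
lemma uneg_mul (x y : Uq F N) : -x * y = -(x * y) := neg_mul (α := Uq F N) x y
lemma uneg_neg (x : Uq F N) : - -x = x := neg_neg x

lemma ldet_def {m : ℕ} (B : Matrix (Fin m) (Fin m) (Uq F N)) :
    ldet F N B = ∑ w : Equiv.Perm (Fin m),
      ((Equiv.Perm.sign w : ℤˣ) : ℤ) • ((List.finRange m).map fun j => B (w j) j).prod := rfl

lemma ldet_zero_row {m : ℕ} (B : Matrix (Fin m) (Fin m) (Uq F N)) (r : Fin m)
    (h : ∀ j, B r j = 0) : ldet F N B = 0 := by
  rw [ldet]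
  refine Finset.sum_eq_zero fun w _ => ?_
  have h0 : (0 : Uq F N) ∈ (List.finRange m).map fun j => B (w j) j := by
    refine List.mem_map.2 ⟨w⁻¹ r, List.mem_finRange _, ?_⟩
    rw [show w (w⁻¹ r) = r from w.apply_symm_apply r]; exact (h _).symm ▸ rfl
  rw [List.prod_eq_zero h0]
  simp

lemma ldet_expand_last (k : ℕ) (B : Matrix (Fin (k+1)) (Fin (k+1)) (Uq F N)) :
    ldet F N B =
      ldet F N (B.submatrix Fin.castSucc Fin.castSucc) * B (Fin.last k) (Fin.last k)
      - ∑ r : Fin k,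
          ldet F N (B.submatrix (fun p => if p = r then Fin.last k else p.castSucc) Fin.castSucc)
            * B r.castSucc (Fin.last k) := by
  classical
  set e : (Option (Fin k) × Equiv.Perm (Fin k)) ≃ Equiv.Perm (Fin (k+1)) :=
    Equiv.Perm.decomposeOption.symm.trans finSuccEquivLast.symm.permCongr with he
  have happc : ∀ (x : Option (Fin k)) (σ : Equiv.Perm (Fin k)) (j : Fin k),
      e (x, σ) j.castSucc = finSuccEquivLast.symm (Equiv.swap none x (some (σ j))) := by
    intro x σ j
    simp [he, Equiv.permCongr_apply, Equiv.Perm.decomposeOption_symm_apply,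
      finSuccEquivLast_castSucc, Equiv.Perm.mul_apply]
  have happ1 : ∀ (σ : Equiv.Perm (Fin k)) (j : Fin k),
      e (none, σ) j.castSucc = (σ j).castSucc := by
    intro σ j; rw [happc]; simp
  have happ2 : ∀ (σ : Equiv.Perm (Fin k)), e (none, σ) (Fin.last k) = Fin.last k := by
    intro σ
    simp [he, Equiv.permCongr_apply, Equiv.Perm.decomposeOption_symm_apply,
      finSuccEquivLast_last, Equiv.Perm.mul_apply]
  have happ3 : ∀ (r : Fin k) (σ : Equiv.Perm (Fin k)) (j : Fin k),
      e (some r, σ) j.castSucc = if σ j = r then Fin.last k else (σ j).castSucc := by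
    intro r σ j; rw [happc]
    by_cases h : σ j = r
    · subst h; simp [Equiv.swap_apply_right]
    · rw [Equiv.swap_apply_of_ne_of_ne (by simp) (by simpa using h)]
      simp [h]
  have happ4 : ∀ (r : Fin k) (σ : Equiv.Perm (Fin k)),
      e (some r, σ) (Fin.last k) = r.castSucc := by
    intro r σ
    simp [he, Equiv.permCongr_apply, Equiv.Perm.decomposeOption_symm_apply,
      finSuccEquivLast_last, Equiv.Perm.mul_apply]
  have hsigno : ∀ (σ : Equiv.Perm (Fin k)),
      Equiv.Perm.sign (Equiv.optionCongr σ) = Equiv.Perm.sign σ := by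
    intro σ
    have := Equiv.Perm.decomposeOption_symm_sign (α := Fin k) σ
    simpa [Equiv.Perm.decomposeOption_symm_apply] using this
  have hsign1 : ∀ (σ : Equiv.Perm (Fin k)),
      Equiv.Perm.sign (e (none, σ)) = Equiv.Perm.sign σ := by
    intro σ
    simp [he, Equiv.Perm.sign_permCongr, Equiv.Perm.decomposeOption_symm_apply, hsigno]
  have hsign2 : ∀ (r : Fin k) (σ : Equiv.Perm (Fin k)),
      Equiv.Perm.sign (e (some r, σ)) = - Equiv.Perm.sign σ := by
    intro r σ
    simp [he, Equiv.Perm.sign_permCongr, Equiv.Perm.decomposeOption_symm_apply, hsigno,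
      Equiv.Perm.sign_swap (by simp : (none : Option (Fin k)) ≠ some r)]
  have hsplit : ∀ (w : Equiv.Perm (Fin (k+1))),
      ((List.finRange (k+1)).map fun j => B (w j) j).prod
        = ((List.finRange k).map fun p => B (w p.castSucc) p.castSucc).prod
            * B (w (Fin.last k)) (Fin.last k) := by
    intro w
    rw [List.finRange_succ_last, List.map_append, List.prod_append, List.map_map]
    simp only [List.map_cons, List.map_nil, List.prod_cons, List.prod_nil, mul_one]
    rfl
  rw [ldet_def, ← Equiv.sum_comp e
    (fun w => ((Equiv.Perm.sign w : ℤˣ) : ℤ) • ((List.finRange (k+1)).map fun j => B (w j) j).prod),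
    Fintype.sum_prod_type, Fintype.sum_option, sub_eq_add_neg]
  congr 1
  · rw [ldet_def, Finset.sum_mul]
    refine Finset.sum_congr rfl fun σ _ => ?_
    have hlist : (List.map (fun p => B ((e (none, σ)) p.castSucc) p.castSucc) (List.finRange k))
        = List.map (fun j => B.submatrix Fin.castSucc Fin.castSucc (σ j) j) (List.finRange k) :=
      List.map_congr_left fun j _ => by rw [happ1]; rfl
    rw [hsplit, hsign1, happ2, hlist, smul_mul_assoc]
  · rw [← Finset.sum_neg_distrib]
    refine Finset.sum_congr rfl fun r _ => ?_
    rw [ldet_def, Finset.sum_mul, ← Finset.sum_neg_distrib]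
    refine Finset.sum_congr rfl fun σ _ => ?_
    have hlist : (List.map (fun p => B ((e (some r, σ)) p.castSucc) p.castSucc) (List.finRange k))
        = List.map (fun j => B.submatrix (fun p => if p = r then Fin.last k else p.castSucc)
            Fin.castSucc (σ j) j) (List.finRange k) :=
      List.map_congr_left fun j _ => by rw [happ3]; rfl
    rw [hsplit, hsign2, happ4, hlist]
    simp only [Units.val_neg, neg_smul, smul_mul_assoc, neg_mul]

/-- Generalized Hessenberg matrix: first `m-1` columns as in `Dmat`, last column `f_{i+1,t}`. -/
def Mm (lam : ℕ → ℤ) (m t : ℕ) : Matrix (Fin m) (Fin m) (Uq F N) :=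
  Matrix.of fun i j =>
    if (j : ℕ) + 1 = m then fij F N ((i:ℕ)+1) t
    else if (i:ℕ) ≤ (j:ℕ) then fij F N ((i:ℕ)+1) ((j:ℕ)+2)
    else if (i:ℕ) = (j:ℕ)+1 then -(algebraMap (kk F) (Uq F N) (hval F lam ((j:ℕ)+1)))
    else 0

/-- The `g_r`-minor shape. -/
def Gm (lam : ℕ → ℤ) (m : ℕ) (r : Fin m) : Matrix (Fin m) (Fin m) (Uq F N) :=
  Matrix.of fun p j =>
    if (if p = r then m else (p:ℕ)) ≤ (j:ℕ) then
      fij F N ((if p = r then m else (p:ℕ))+1) ((j:ℕ)+2)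
    else if (if p = r then m else (p:ℕ)) = (j:ℕ)+1 then
      -(algebraMap (kk F) (Uq F N) (hval F lam ((j:ℕ)+1)))
    else 0

lemma sub_Mm_g (lam : ℕ → ℤ) (m t : ℕ) (r : Fin m) :
    (Mm F N lam (m+1) t).submatrix (fun p => if p = r then Fin.last m else p.castSucc)
      Fin.castSucc = Gm F N lam m r := by
  ext p j
  simp only [Mm, Gm, Matrix.submatrix_apply, Matrix.of_apply]
  by_cases hp : p = r <;>
    simp only [hp, if_true, if_false, Fin.val_last, Fin.coe_castSucc] <;>
    split_ifs <;> first | rfl | omega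
lemma sub_Mm_cs (lam : ℕ → ℤ) (m t : ℕ) :
    (Mm F N lam (m+1) t).submatrix Fin.castSucc Fin.castSucc = Mm F N lam m (m+1) := by
  ext p j
  simp only [Mm, Matrix.submatrix_apply, Matrix.of_apply, Fin.coe_castSucc]
  have hj := j.isLt
  have hp := p.isLt
  split_ifs <;> first | rfl | omega | (congr 1; omega)

lemma Mm_last_last (lam : ℕ → ℤ) (m t : ℕ) :
    Mm F N lam (m+1) t (Fin.last m) (Fin.last m) = fij F N (m+1) t := by
  simp [Mm]

lemma Mm_cs_last (lam : ℕ → ℤ) (m t : ℕ) (r : Fin m) :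
    Mm F N lam (m+1) t r.castSucc (Fin.last m) = fij F N ((r:ℕ)+1) t := by
  simp [Mm]

lemma ldet_Gm (lam : ℕ → ℤ) : ∀ (m : ℕ) (r : Fin m),
    ldet F N (Gm F N lam m r) =
      -(ldet F N (Mm F N lam (r:ℕ) ((r:ℕ)+1)) *
        algebraMap (kk F) (Uq F N) (∏ j ∈ Finset.Icc ((r:ℕ)+1) m, hval F lam j)) := by
  intro m
  induction m with
  | zero => exact fun r => r.elim0
  | succ m ih =>
    intro r
    rw [ldet_expand_last]
    by_cases hr : r = Fin.last m
    · subst hr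
      have h1 : (Gm F N lam (m+1) (Fin.last m)).submatrix Fin.castSucc Fin.castSucc
          = Mm F N lam m (m+1) := by
        ext p j
        simp only [Gm, Mm, Matrix.submatrix_apply, Matrix.of_apply, Fin.coe_castSucc]
        have : ¬ (p.castSucc = Fin.last m) := by
          simp [Fin.ext_iff]; omega
        simp only [this, if_false]
        have hj := j.isLt
        have hp := p.isLt
        split_ifs <;> first | rfl | omega | (congr 1; omega)
      have h2 : Gm F N lam (m+1) (Fin.last m) (Fin.last m) (Fin.last m)
          = -(algebraMap (kk F) (Uq F N) (hval F lam (m+1))) := by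
        simp only [Gm, Matrix.of_apply, if_true, Fin.val_last]
        split_ifs <;> first | rfl | omega
      have h3 : ∀ s : Fin m,
          ldet F N ((Gm F N lam (m+1) (Fin.last m)).submatrix
            (fun p => if p = s then Fin.last m else p.castSucc) Fin.castSucc) = 0 := by
        intro s
        refine ldet_zero_row F N _ s fun j => ?_
        simp only [Gm, Matrix.submatrix_apply, Matrix.of_apply, if_pos rfl, Fin.coe_castSucc,
          Fin.val_last]
        have hj := j.isLt
        split_ifs <;> first | rfl | omega
      rw [h1, h2]
      rw [Finset.sum_eq_zero fun s _ => by rw [h3 s, zero_mul]]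
      rw [sub_zero, Fin.val_last, Finset.Icc_self, Finset.prod_singleton, umul_neg]
    · have hrm : (r:ℕ) < m := by
        have := r.isLt
        have : (r:ℕ) ≠ m := fun h => hr (by simp [Fin.ext_iff, h])
        omega
      set r' : Fin m := ⟨(r:ℕ), hrm⟩ with hr'
      have hrr : r = r'.castSucc := by simp [Fin.ext_iff, hr']
      have h1 : ldet F N ((Gm F N lam (m+1) r).submatrix Fin.castSucc Fin.castSucc) = 0 := by
        refine ldet_zero_row F N _ r' fun j => ?_
        simp only [Matrix.submatrix_apply, Gm, Matrix.of_apply, Fin.coe_castSucc]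
        have hc : r'.castSucc = r := hrr.symm
        simp only [hc, if_pos rfl]
        have hj := j.isLt
        split_ifs <;> first | rfl | omega
      have h3 : ∀ s : Fin m, s ≠ r' →
          ldet F N ((Gm F N lam (m+1) r).submatrix
            (fun p => if p = s then Fin.last m else p.castSucc) Fin.castSucc) = 0 := by
        intro s hs
        refine ldet_zero_row F N _ r' fun j => ?_
        simp only [Matrix.submatrix_apply, Gm, Matrix.of_apply]
        rw [if_neg (show ¬ r' = s from fun h => hs h.symm)]
        rw [if_pos hrr.symm]
        have hj := j.isLt
        simp only [Fin.coe_castSucc]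
        split_ifs <;> first | rfl | omega
      have h2 : (Gm F N lam (m+1) r).submatrix
          (fun p => if p = r' then Fin.last m else p.castSucc) Fin.castSucc = Gm F N lam m r' := by
        ext p j
        have hj := j.isLt
        have hne2 : ¬ ((Fin.last m) = r) := fun h => hr h.symm
        by_cases hp : p = r'
        · simp only [Gm, Matrix.submatrix_apply, Matrix.of_apply, hp, eq_self_iff_true,
            if_true, if_false, Fin.val_last, Fin.coe_castSucc, hne2]
        · have hne : ¬ (p.castSucc = r) := by rw [hrr, Fin.castSucc_inj]; exact hp
          simp only [Gm, Matrix.submatrix_apply, Matrix.of_apply, hp, if_false, hne,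
            Fin.coe_castSucc]
      have h4 : Gm F N lam (m+1) r r'.castSucc (Fin.last m)
          = -(algebraMap (kk F) (Uq F N) (hval F lam (m+1))) := by
        simp only [Gm, Matrix.of_apply, Fin.val_last]
        rw [if_pos hrr.symm]
        split_ifs <;> first | rfl | omega
      rw [h1, zero_mul, zero_sub]
      rw [Finset.sum_eq_single r' (fun s _ hs => by rw [h3 s hs, zero_mul])
        (fun h => absurd (Finset.mem_univ r') h)]
      rw [h2, h4, ih r']
      have hc : (r':ℕ) = (r:ℕ) := rfl
      have hle : (r:ℕ) + 1 ≤ m + 1 := by omega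
      rw [hc, Finset.prod_Icc_succ_top hle, map_mul]
      simp only [uneg_mul, umul_neg, uneg_neg, neg_neg, mul_assoc]

lemma ldet_Mm (lam : ℕ → ℤ) (m t : ℕ) :
    ldet F N (Mm F N lam (m+1) t) =
      ∑ i : Fin (m+1), ldet F N (Mm F N lam (i:ℕ) ((i:ℕ)+1)) *
        algebraMap (kk F) (Uq F N) (∏ j ∈ Finset.Icc ((i:ℕ)+1) m, hval F lam j) *
        fij F N ((i:ℕ)+1) t := by
  rw [ldet_expand_last, Fin.sum_univ_castSucc]
  rw [sub_Mm_cs, Mm_last_last]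
  have hlast : ldet F N (Mm F N lam m (m+1)) *
      algebraMap (kk F) (Uq F N) (∏ j ∈ Finset.Icc (m+1) m, hval F lam j) * fij F N (m+1) t
      = ldet F N (Mm F N lam m (m+1)) * fij F N (m+1) t := by
    rw [Finset.Icc_eq_empty (by omega), Finset.prod_empty, map_one, mul_one]
  rw [Fin.val_last, hlast, sub_eq_add_neg, add_comm]
  congr 1
  rw [← Finset.sum_neg_distrib]
  refine Finset.sum_congr rfl fun r _ => ?_
  rw [sub_Mm_g, Mm_cs_last, ldet_Gm, Fin.coe_castSucc, uneg_mul, uneg_neg]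

/-! ### Generator-level relations -/

lemma fword_zero (a : ℕ) : fword F N a 0 = fgen F N a := rfl

lemma fword_succ (a d : ℕ) : fword F N a (d+1) =
    qq F • (fword F N a d * fgen F N (a+1+d)) -
      (qq F)⁻¹ • (fgen F N (a+1+d) * fword F N a d) := rfl

lemma fij_def' (a b : ℕ) (h : a + 1 ≤ b) : fij F N a (b+1) =
    qq F • (fij F N a b * fgen F N b) - (qq F)⁻¹ • (fgen F N b * fij F N a b) := by
  unfold fij
  have h1 : b + 1 - a - 1 = (b - a - 1) + 1 := by omega
  rw [h1, fword_succ]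
  have h2 : a + 1 + (b - a - 1) = b := by omega
  rw [h2]

lemma fij_self (a : ℕ) : fij F N a (a+1) = fgen F N a := by
  unfold fij
  have : a + 1 - a - 1 = 0 := by omega
  rw [this, fword_zero]

lemma comm_fgen (c : ℕ) (h : c + 2 ≤ N) : Commute (fgen F N N) (fgen F N c) := by
  rcases Nat.eq_zero_or_pos c with hc | hc
  · have h0 : fgen F N c = 0 := dif_neg (by omega)
    rw [h0]; exact Commute.zero_right _
  · have e1 : fgen F N N = gen F N (Gen.f ⟨N-1, by omega⟩) := dif_pos ⟨by omega, le_refl N⟩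
    have e2 : fgen F N c = gen F N (Gen.f ⟨c-1, by omega⟩) := dif_pos ⟨hc, by omega⟩
    rw [e1, e2]
    have hrel := RingQuot.mkAlgHom_rel (kk F)
      (UqRel.serre_f_far (F := F) (N := N) ⟨N-1, by omega⟩ ⟨c-1, by omega⟩ (Or.inr (by simp; omega)))
    unfold Commute SemiconjBy
    simpa only [gen, map_mul] using hrel

lemma comm_fword (a : ℕ) : ∀ d : ℕ, a + d + 2 ≤ N → Commute (fgen F N N) (fword F N a d)
  | 0, h => by rw [fword_zero]; exact comm_fgen F N a (by omega)
  | d+1, h => by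
    rw [fword_succ]
    have h1 := comm_fword a d (by omega)
    have h2 := comm_fgen F N (a+1+d) (by omega)
    exact ((h1.mul_right h2).smul_right _).sub_right ((h2.mul_right h1).smul_right _)

lemma comm_fij (a b : ℕ) (hab : a < b) (hb : b + 1 ≤ N) :
    Commute (fgen F N N) (fij F N a b) := by
  unfold fij; exact comm_fword F N a (b - a - 1) (by omega)

lemma comm_alg (c : kk F) (x : Uq F N) : Commute x (algebraMap (kk F) (Uq F N) c) :=
  (Algebra.commutes c x).symm

lemma ldet_commute {m : ℕ} (B0 : Matrix (Fin m) (Fin m) (Uq F N)) (x : Uq F N)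
    (h : ∀ i j, Commute x (B0 i j)) : Commute x (ldet F N B0) := by
  rw [ldet]
  refine Commute.sum_right _ _ _ fun w _ => ?_
  refine Commute.smul_right ?_ _
  refine Commute.list_prod_right _ _ fun y hy => ?_
  obtain ⟨j, -, rfl⟩ := List.mem_map.1 hy
  exact h _ _

lemma comm_Mm (lam : ℕ → ℤ) (i t : ℕ) (hit : i < t) (ht : t + 1 ≤ N) :
    Commute (fgen F N N) (ldet F N (Mm F N lam i t)) := by
  refine ldet_commute F N _ _ fun p j => ?_
  have hp := p.isLt
  have hj := j.isLt
  simp only [Mm, Matrix.of_apply]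
  split_ifs with hA hB hC
  · exact comm_fij F N _ _ (by omega) (by omega)
  · exact comm_fij F N _ _ (by omega) (by omega)
  · exact (comm_alg F N _ _).neg_right
  · exact Commute.zero_right _

/-! ### Scalar lemmas -/

lemma hq0 : qq F ≠ 0 := RatFunc.X_ne_zero
lemma hv0 : vv F ≠ 0 := pow_ne_zero _ (hq0 F)

lemma hv1 : vv F - (vv F)⁻¹ ≠ 0 := by
  intro h
  have h1 : vv F * vv F = 1 := by
    have he : vv F = (vv F)⁻¹ := sub_eq_zero.mp h
    calc vv F * vv F = vv F * (vv F)⁻¹ := by rw [← he]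
    _ = 1 := mul_inv_cancel₀ (hv0 F)
  have h2 : (RatFunc.X : RatFunc F)^4 = 1 := by
    have he : vv F * vv F = (RatFunc.X : RatFunc F)^4 := by rw [vv, qq]; ring
    rw [← he]; exact h1
  have h3 : (Polynomial.X : Polynomial F)^4 = 1 := by
    apply RatFunc.algebraMap_injective F
    rw [map_pow, RatFunc.algebraMap_X, map_one]
    exact h2
  have h4 := congrArg Polynomial.natDegree h3
  simp [Polynomial.natDegree_X_pow] at h4

lemma qint_one : qint F 1 = 1 := by
  unfold qint
  rw [zpow_one, zpow_neg, zpow_one, div_self (hv1 F)]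

lemma qint_rec (n : ℤ) : qint F (n+1) = vv F ^ n + (vv F)⁻¹ * qint F n := by
  unfold qint
  have h0 := hv0 F
  have h1 := hv1 F
  have e1 : vv F ^ (n+1) = vv F ^ n * vv F := zpow_add_one₀ h0 n
  have e2 : vv F ^ (-(n+1)) = vv F ^ (-n) * (vv F)⁻¹ := by
    rw [show -(n+1) = -n + (-1) by ring, zpow_add₀ h0, zpow_neg_one]
  have hvn : vv F ^ n ≠ 0 := zpow_ne_zero _ h0
  rw [div_eq_iff h1, add_mul, mul_assoc, div_mul_cancel₀ _ h1, e1, e2, zpow_neg]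
  field_simp
  ring

/-! ### Serre relations for root vectors -/

lemma serre_base (hN : 2 ≤ N) :
    fgen F N N * fgen F N N * fgen F N (N-1)
      - (vv F + (vv F)⁻¹) • (fgen F N N * fgen F N (N-1) * fgen F N N)
      + fgen F N (N-1) * (fgen F N N * fgen F N N) = 0 := by
  have e1 : fgen F N N = gen F N (Gen.f ⟨N-1, by omega⟩) := dif_pos ⟨by omega, le_refl N⟩
  have e2 : fgen F N (N-1) = gen F N (Gen.f ⟨N-1-1, by omega⟩) := dif_pos ⟨by omega, by omega⟩
  have hco : (qq F^(2:ℕ) + qq F^(-2:ℤ)) = vv F + (vv F)⁻¹ := by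
    rw [vv]
    congr 1
  have hrel := RingQuot.mkAlgHom_rel (kk F)
    (UqRel.serre_f_near (F := F) (N := N) ⟨N-1, by omega⟩ ⟨N-1-1, by omega⟩ (Or.inr (by simp; omega)))
  rw [e1, e2, ← hco]
  simpa only [gen, map_mul, map_sub, map_add, map_smul, map_pow, map_zero, pow_two] using hrel

lemma serre_fijN (hN : 2 ≤ N) (a : ℕ) (h1 : 1 ≤ a) (h2 : a + 1 ≤ N) :
    fgen F N N * fgen F N N * fij F N a N
      - (vv F + (vv F)⁻¹) • (fgen F N N * fij F N a N * fgen F N N)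
      + fij F N a N * (fgen F N N * fgen F N N) = 0 := by
  rcases eq_or_lt_of_le h2 with heq | hlt
  · have he : fij F N a N = fgen F N (N-1) := by
      have h3 : fij F N a N = fij F N (N-1) ((N-1)+1) := by
        congr 1 <;> omega
      rw [h3, fij_self]
    rw [he]
    exact serre_base F N hN
  · have hA : fij F N a N = qq F • (fij F N a (N-1) * fgen F N (N-1))
        - (qq F)⁻¹ • (fgen F N (N-1) * fij F N a (N-1)) := by
      have h3 := fij_def' F N a (N-1) (by omega)
      rw [show (N-1)+1 = N by omega] at h3
      exact h3
    exact qsh_serre_ext (qq F) (vv F + (vv F)⁻¹) (fgen F N N) (fij F N a (N-1))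
      (fgen F N (N-1)) (fij F N a N)
      (comm_fij F N a (N-1) (by omega) (by omega)).eq
      (serre_base F N hN) hA

lemma BC_rel (hN : 2 ≤ N) (a : ℕ) (h1 : 1 ≤ a) (h2 : a + 1 ≤ N) :
    fgen F N N * fij F N a (N+1) = (vv F)⁻¹ • (fij F N a (N+1) * fgen F N N) := by
  refine qsh_BC (qq F) (hq0 F) (vv F) rfl (fgen F N N) (fij F N a N) (fij F N a (N+1))
    (serre_fijN F N hN a h1 h2) ?_
  exact fij_def' F N a N (by omega)

lemma pow_fij (hN : 2 ≤ N) (a : ℕ) (h1 : 1 ≤ a) (h2 : a + 1 ≤ N) (p : ℕ) :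
    fgen F N N ^ (p+1) * fij F N a N
      = vv F ^ (p+1) • (fij F N a N * fgen F N N ^ (p+1))
        - (qq F * qint F (p+1)) • (fij F N a (N+1) * fgen F N N ^ p) := by
  refine qsh_pow (qq F) (vv F) (hq0 F) rfl (fgen F N N) (fij F N a N) (fij F N a (N+1))
    ?_ (BC_rel F N hN a h1 h2) (fun n => qint F n) (qint_one F) ?_ p
  · have := qsh_BA (qq F) (hq0 F) (fgen F N N) (fij F N a N) (fij F N a (N+1))
      (fij_def' F N a N (by omega))
    rw [show (qq F)^2 = vv F from rfl] at this
    exact this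
  · intro n
    have h := qint_rec F ((n+1 : ℕ) : ℤ)
    rw [show ((n+1 : ℕ) : ℤ)+1 = ((n+2 : ℕ) : ℤ) by push_cast; ring, zpow_natCast] at h
    exact h

/-! ### helpers for assembling the main identity -/

lemma umul_sub (x y z : Uq F N) : x * (y - z) = x*y - x*z := mul_sub x y z
lemma umul_smul (c : kk F) (x y : Uq F N) : x * (c • y) = c • (x * y) := mul_smul_comm c x y
lemma usmul_mul (c : kk F) (x y : Uq F N) : (c • x) * y = c • (x * y) := smul_mul_assoc c x y
lemma usmul_smul (c d : kk F) (x : Uq F N) : c • d • x = (c*d) • x := smul_smul c d x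
lemma uneg_smul (c : kk F) (x : Uq F N) : (-c) • x = -(c • x) := neg_smul c x
lemma ualg_mul (c : kk F) (x : Uq F N) :
    algebraMap (kk F) (Uq F N) c * x = c • x := (Algebra.smul_def c x).symm

lemma Dmat_eq (lam : ℕ → ℤ) (n : ℕ) (hn : 1 ≤ n) : Dmat F N lam n = Mm F N lam (n-1) n := by
  ext i j
  have hi := i.isLt
  have hj := j.isLt
  simp only [Dmat, Mm, Matrix.of_apply]
  split_ifs <;> first | rfl | omega | (congr 1 <;> omega)

lemma Mm_congr (lam mu : ℕ → ℤ) (hv : ∀ j, j + 2 ≤ N → hval F mu j = hval F lam j)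
    (i t : ℕ) (hi : i + 1 ≤ N) : Mm F N mu i t = Mm F N lam i t := by
  ext r j
  have hr := r.isLt
  have hj := j.isLt
  simp only [Mm, Matrix.of_apply]
  split_ifs <;> first | rfl | (rw [hv ((j:ℕ)+1) (by omega)])

lemma key (hN : 2 ≤ N) (lam : ℕ → ℤ) (p : ℕ) (h0 : kk F)
    (hS1 : vv F ^ (p+1) * h0 = -(qq F * qint F (p+1)))
    (i : ℕ) (hi : i + 2 ≤ N) (c : kk F) :
    fgen F N N^(p+1) * (ldet F N (Mm F N lam i (i+1)) * algebraMap (kk F) (Uq F N) c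
        * fij F N (i+1) N)
    = vv F^(p+1) • (ldet F N (Mm F N lam i (i+1)) * algebraMap (kk F) (Uq F N) (c * h0)
          * fij F N (i+1) (N+1) * fgen F N N ^ p)
      + vv F^(p+1) • (ldet F N (Mm F N lam i (i+1)) * algebraMap (kk F) (Uq F N) c
          * fij F N (i+1) N * (fgen F N N * fgen F N N ^ p)) := by
  set B := fgen F N N with hBdef
  set D := ldet F N (Mm F N lam i (i+1)) with hDdef
  set K := algebraMap (kk F) (Uq F N) c with hKdef
  set f1 := fij F N (i+1) N with hf1
  set f2 := fij F N (i+1) (N+1) with hf2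
  have hBD : Commute (B^(p+1)) D :=
    ((comm_Mm F N lam i (i+1) (by omega) (by omega)).pow_left _)
  have hBK : Commute (B^(p+1)) K := comm_alg F N c _
  have e0 : B^(p+1) * (D * K * f1) = D * K * (B^(p+1) * f1) := by
    rw [← mul_assoc, ← mul_assoc, hBD.eq, mul_assoc D, hBK.eq, ← mul_assoc, mul_assoc]
  rw [e0, pow_fij F N hN (i+1) (by omega) (by omega) p]
  rw [umul_sub, umul_smul, umul_smul]
  have e1 : D * algebraMap (kk F) (Uq F N) (c * h0) * f2 * B^p
      = h0 • (D * K * (f2 * B^p)) := by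
    rw [map_mul, ← hKdef, ← mul_assoc D K (algebraMap (kk F) (Uq F N) h0),
      mul_assoc (D*K) (algebraMap (kk F) (Uq F N) h0) f2,
      mul_assoc (D*K) (algebraMap (kk F) (Uq F N) h0 * f2) (B^p),
      ualg_mul, usmul_mul, umul_smul]
  have eA : D * K * f1 * (B * B^p) = D * K * (f1 * B^(p+1)) := by
    rw [mul_assoc (D*K) f1 (B*B^p), ← pow_succ']
  have eB : vv F^(p+1) • (D * algebraMap (kk F) (Uq F N) (c * h0) * f2 * B^p)
      = -((qq F * qint F (p+1)) • (D * K * (f2 * B^p))) := by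
    rw [e1, usmul_smul, hS1, uneg_smul]
  rw [eA, eB, sub_eq_add_neg, add_comm]

end Aux

theorem stmt18' (F : Type) [Field F] (N : ℕ) (hN : 2 ≤ N) (p : ℕ)
    (lam mu : ℕ → ℤ)
    (hη : pairσ lam N = 1 - (N : ℤ))
    (hα : lam N = -(p : ℤ) - 1)
    (hmu : ∀ j, mu j = lam j + (p : ℤ) * cartan N j) :
    fgen F N N ^ (p + 1) * ldet F N (Dmat F N mu N) =
      vv F ^ (p + 1) • (ldet F N (Dmat F N lam (N + 1)) * fgen F N N ^ p) := by
  obtain ⟨m, rfl⟩ : ∃ m, N = m + 2 := ⟨N - 2, by omega⟩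
  -- scalar facts
  have hps : pairσ lam (m+1) = (p:ℤ) - m := by
    have hsplit : pairσ lam (m+2) = pairσ lam (m+1) + lam (m+2) := by
      unfold pairσ
      exact Finset.sum_Icc_succ_top (by omega) _
    rw [hsplit, hα] at hη
    push_cast at hη ⊢
    linarith
  have hS1 : vv F^(p+1) * hval F lam (m+1) = -(qq F * qint F (p+1)) := by
    unfold hval
    rw [hps]
    rw [show ((m+1:ℕ):ℤ) = (m:ℤ)+1 by push_cast; ring]
    rw [show ((p:ℤ) - m + ((m:ℤ)+1) - 1) = (p:ℤ) by ring]
    rw [show ((p:ℤ) - m + ((m:ℤ)+1)) = (p:ℤ)+1 by ring]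
    have e3 : vv F ^ (p+1) * (vv F ^ (-(p:ℤ))) = vv F := by
      rw [← zpow_natCast (vv F) (p+1), ← zpow_add₀ (Aux.hv0 F)]
      norm_num
    calc vv F^(p+1) * (-(qq F)⁻¹ * vv F^(-(p:ℤ)) * qint F ((p:ℤ)+1))
        = -((vv F^(p+1) * vv F^(-(p:ℤ))) * ((qq F)⁻¹ * qint F ((p:ℤ)+1))) := by ring
      _ = -(vv F * ((qq F)⁻¹ * qint F ((p:ℤ)+1))) := by rw [e3]
      _ = -(qq F * qint F (p+1)) := by
          have hvq : vv F * (qq F)⁻¹ = qq F := by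
            rw [vv, pow_two, mul_assoc, mul_inv_cancel₀ (Aux.hq0 F), mul_one]
          rw [← mul_assoc, hvq, show ((p:ℤ)+1) = ((p+1:ℕ):ℤ) by push_cast; ring]
  -- determinant expansions
  have hvals : ∀ j, j + 2 ≤ m+2 → hval F mu j = hval F lam j := by
    intro j hj
    unfold hval
    have hp : pairσ mu j = pairσ lam j := by
      unfold pairσ
      refine Finset.sum_congr rfl fun k hk => ?_
      have hk' := (Finset.mem_Icc.mp hk).2
      rw [hmu k]
      have hc : cartan (m+2) k = 0 := by
        unfold cartan
        rw [if_neg (by omega), if_neg (by omega)]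
      rw [hc, mul_zero, add_zero]
    rw [hp]
  rw [Aux.Dmat_eq F (m+2) mu (m+2) (by omega), Aux.Dmat_eq F (m+2) lam (m+3) (by omega)]
  rw [show (m+2)-1 = m+1 from rfl, show (m+3)-1 = m+2 from rfl]
  rw [Aux.ldet_Mm F (m+2) mu m (m+2), Aux.ldet_Mm F (m+2) lam (m+1) (m+3)]
  have hsum1 : ∀ i : Fin (m+1),
      ldet F (m+2) (Aux.Mm F (m+2) mu (i:ℕ) ((i:ℕ)+1)) *
        algebraMap (kk F) (Uq F (m+2)) (∏ j ∈ Finset.Icc ((i:ℕ)+1) m, hval F mu j) *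
        fij F (m+2) ((i:ℕ)+1) (m+2)
      = ldet F (m+2) (Aux.Mm F (m+2) lam (i:ℕ) ((i:ℕ)+1)) *
        algebraMap (kk F) (Uq F (m+2)) (∏ j ∈ Finset.Icc ((i:ℕ)+1) m, hval F lam j) *
        fij F (m+2) ((i:ℕ)+1) (m+2) := by
    intro i
    have hi := i.isLt
    rw [Aux.Mm_congr F (m+2) lam mu hvals (i:ℕ) ((i:ℕ)+1) (by omega)]
    rw [Finset.prod_congr rfl fun j hj => hvals j
      (by have := (Finset.mem_Icc.mp hj).2; omega)]
  rw [Finset.sum_congr rfl fun i _ => hsum1 i]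
  conv_rhs => rw [Fin.sum_univ_castSucc]
  simp only [Fin.coe_castSucc, Fin.val_last]
  rw [show m+1+1 = m+2 from rfl]
  rw [Finset.Icc_eq_empty (show ¬ m+2 ≤ m+1 by omega), Finset.prod_empty, map_one, mul_one]
  rw [show fij F (m+2) (m+2) (m+3) = fgen F (m+2) (m+2) from Aux.fij_self F (m+2) (m+2)]
  rw [Aux.ldet_Mm F (m+2) lam m (m+2)]
  rw [Finset.mul_sum]
  rw [add_mul, mul_assoc, Finset.sum_mul, Finset.sum_mul, smul_add, Finset.smul_sum,
    Finset.smul_sum, ← Finset.sum_add_distrib]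
  refine Finset.sum_congr rfl fun i _ => ?_
  have hi := i.isLt
  rw [show (∏ j ∈ Finset.Icc ((i:ℕ)+1) (m+1), hval F lam j)
      = (∏ j ∈ Finset.Icc ((i:ℕ)+1) m, hval F lam j) * hval F lam (m+1)
    from Finset.prod_Icc_succ_top (by omega) _]
  rw [show m+2+1 = m+3 from rfl] at *
  exact Aux.key F (m+2) (by omega) lam p (hval F lam (m+1)) hS1 (i:ℕ) (by omega) _

end

/-- assume `N ≥ 2`. Let `p ≥ 0`, `λ` a weight with `(λ,η) = 1-N`
and `(λ,α_N) = -p-1`, and `μ = λ + p α_N` (so `(μ,α_j) = (λ,α_j) + p a_{Nj}`).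
Then, with `F = f_N`: `F^{p+1} det→(D^N(μ)) = v^{p+1} det→(D^{N+1}(λ)) F^p` in `U`. -/
theorem stmt18 (F : Type) [Field F] (N : ℕ) (hN : 2 ≤ N) (p : ℕ)
    (lam mu : ℕ → ℤ)
    (hη : pairσ lam N = 1 - (N : ℤ))
    (hα : lam N = -(p : ℤ) - 1)
    (hmu : ∀ j, mu j = lam j + (p : ℤ) * cartan N j) :
    fgen F N N ^ (p + 1) * ldet F N (Dmat F N mu N) =
      vv F ^ (p + 1) • (ldet F N (Dmat F N lam (N + 1)) * fgen F N N ^ p) :=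
  stmt18' F N hN p lam mu hη hα hmu
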